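/- In the setting described (two commuting Heisenberg families π_L, π_R on M at levels κ and −κ, and a smooth family e_{(n)} with the commutation relations of the vertex operator e^α), for all x ∈ 𝔥 and all integers m, n: if m ≤ 0 then [π_L(x)_{(m)}, A_n] = κ(x,α)·A_{m+n} and [π_R(x)_{(m)}, A_n] = −κ(x,α)·A_{m+n}; if m ≥ 1 then [π_L(x)_{(m)}, A_n] = 0 and [π_R(x)_{(m)}, A_n] = 0. -/

import Mathlib

/-!
Statement 8: Two commuting Heisenberg families `π_L, π_R` on `M` at levels `κ`
and `−κ`, together with a smooth family `e_{(n)}` obeying the commutation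
relations of the vertex operator `e^α`.  With `b_{(n)} = −π_L(α)_{(n)} −
π_R(α)_{(n)}`, `E_r` the coefficients of `exp(Σ_{n<0} b_{(n)}/(−n) z^{−n})`,
and `A_n v = Σ_{r ≤ 0} E_r (e_{(n−r)} v)`: for all `x ∈ 𝔥`, `m, n ∈ ℤ`,
if `m ≤ 0` then `[π_L(x)_{(m)}, A_n] = κ(x,α)·A_{m+n}` and
`[π_R(x)_{(m)}, A_n] = −κ(x,α)·A_{m+n}`; if `m ≥ 1` both commutators vanish.
-/

open scoped BigOperators

variable {H M : Type*} [AddCommGroup H] [Module ℂ H] [AddCommGroup M] [Module ℂ M]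

/-- The finset of `k`-tuples of negative integers summing to `r`. -/
noncomputable def negTuples (k : ℕ) (r : ℤ) : Finset (Fin k → ℤ) :=
  (Fintype.piFinset fun _ => Finset.Icc r (-1)).filter fun f => ∑ j, f j = r

/-- The coefficient `E_r` of `z^{−r}` in `exp(Σ_{n<0} b_{(n)}/(−n) z^{−n})`
for a commuting family `b : ℤ → End ℂ M`; it is `id` for `r = 0` and `0` for
`r ≥ 1`. -/
noncomputable def Ecoef (b : ℤ → Module.End ℂ M) (r : ℤ) : Module.End ℂ M :=
  if 1 ≤ r then 0
  else
    ∑ k ∈ Finset.range ((-r).toNat + 1),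
      (k.factorial : ℂ)⁻¹ •
        ∑ f ∈ negTuples k r,
          (∏ j, (-(f j : ℂ))⁻¹) • (List.ofFn fun j => b (f j)).prod

/-- The diagonal Heisenberg family `b_{(n)} = −π_L(α)_{(n)} − π_R(α)_{(n)}`. -/
def diagB (πL πR : H → ℤ → Module.End ℂ M) (α : H) : ℤ → Module.End ℂ M :=
  fun n => -πL α n - πR α n

/-- `A_n v := Σ_{r ≤ 0} E_r (e_{(n−r)} v)`, a finite sum by smoothness
(made total via `finsum`). -/
noncomputable def Aop (b e : ℤ → Module.End ℂ M) (n : ℤ) (v : M) : M :=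
  ∑ᶠ r : ℤ, Ecoef b r (e (n - r) v)

/-! ### Auxiliary lemmas -/

noncomputable def Tk (b : ℤ → Module.End ℂ M) (k : ℕ) (r : ℤ) : Module.End ℂ M :=
  ∑ f ∈ negTuples k r, (∏ j, (-(f j : ℂ))⁻¹) • (List.ofFn fun j => b (f j)).prod

lemma mem_negTuples {k : ℕ} {r : ℤ} {f : Fin k → ℤ} :
    f ∈ negTuples k r ↔ (∀ j, f j ≤ -1) ∧ ∑ j, f j = r := by
  simp only [negTuples, Finset.mem_filter, Fintype.mem_piFinset, Finset.mem_Icc]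
  constructor
  · rintro ⟨h1, h2⟩; exact ⟨fun j => (h1 j).2, h2⟩
  · rintro ⟨h1, h2⟩
    refine ⟨fun j => ⟨?_, h1 j⟩, h2⟩
    have hle : ∑ l ∈ Finset.univ.erase j, f l ≤ 0 :=
      Finset.sum_nonpos fun l _ => le_trans (h1 l) (by norm_num)
    have hsplit : f j + ∑ l ∈ Finset.univ.erase j, f l = r := by
      rw [Finset.add_sum_erase _ f (Finset.mem_univ j)]; exact h2
    omega

lemma Tk_eq_zero (b : ℤ → Module.End ℂ M) {k : ℕ} {r : ℤ} (h : -(k : ℤ) < r) :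
    Tk b k r = 0 := by
  refine Finset.sum_eq_zero fun f hf => ?_
  exfalso
  obtain ⟨h1, h2⟩ := mem_negTuples.mp hf
  have : ∑ j, f j ≤ ∑ _j : Fin k, (-1 : ℤ) := Finset.sum_le_sum fun j _ => h1 j
  simp only [Finset.sum_const, Finset.card_univ, Fintype.card_fin, smul_eq_mul,
    nsmul_eq_mul, mul_neg, mul_one] at this
  omega

lemma Tk_succ (b : ℤ → Module.End ℂ M) (k : ℕ) (r : ℤ) :
    Tk b (k + 1) r
      = ∑ i ∈ Finset.Icc r (-1), (-(i : ℂ))⁻¹ • (b i * Tk b k (r - i)) := by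
  have key : Tk b (k + 1) r
      = ∑ p ∈ (Finset.Icc r (-1)).sigma (fun i => negTuples k (r - i)),
          (-(p.1 : ℂ))⁻¹ •
            ((∏ j, (-(p.2 j : ℂ))⁻¹) •
              (b p.1 * (List.ofFn fun j => b (p.2 j)).prod)) := by
    refine Finset.sum_bij' (fun f _ => (⟨f 0, Fin.tail f⟩ : Σ _i : ℤ, (Fin k → ℤ)))
      (fun p _ => Fin.cons p.1 p.2) ?_ ?_ ?_ ?_ ?_
    · intro f hf
      obtain ⟨h1, h2⟩ := mem_negTuples.mp hf
      rw [Fin.sum_univ_succ] at h2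
      have hle : ∑ l : Fin k, f l.succ ≤ 0 :=
        Finset.sum_nonpos fun l _ => le_trans (h1 l.succ) (by norm_num)
      refine Finset.mem_sigma.mpr ⟨Finset.mem_Icc.mpr ⟨by linarith, h1 0⟩, ?_⟩
      refine mem_negTuples.mpr ⟨fun l => h1 l.succ, ?_⟩
      have ht : ∑ l : Fin k, Fin.tail f l = ∑ l : Fin k, f l.succ := rfl
      rw [ht]; linarith
    · intro p hp
      obtain ⟨hp1, hp2⟩ := Finset.mem_sigma.mp hp
      obtain ⟨h1, h2⟩ := mem_negTuples.mp hp2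
      refine mem_negTuples.mpr ⟨fun j => ?_, ?_⟩
      · refine Fin.cases ?_ ?_ j
        · exact (Finset.mem_Icc.mp hp1).2
        · intro l; simpa using h1 l
      · rw [Fin.sum_univ_succ]
        simp only [Fin.cons_zero, Fin.cons_succ]
        omega
    · intro f _; exact Fin.cons_self_tail f
    · intro p _
      simp only [Fin.cons_zero, Fin.tail_cons]
    · intro f hf
      simp only
      rw [Fin.prod_univ_succ, List.ofFn_succ, List.prod_cons, mul_smul]
      rfl
  rw [key, Finset.sum_sigma]
  refine Finset.sum_congr rfl fun i _ => ?_
  rw [Tk, Finset.mul_sum, Finset.smul_sum]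
  refine Finset.sum_congr rfl fun g _ => ?_
  rw [mul_smul_comm]

lemma Tk_zero (b : ℤ → Module.End ℂ M) (r : ℤ) :
    Tk b 0 r = if r = 0 then 1 else 0 := by
  by_cases h : r = 0
  · subst h
    rw [Tk]
    have : negTuples 0 (0:ℤ) = {![]} := by
      ext f
      simp [mem_negTuples, Subsingleton.elim f ![]]
    simp [this]
  · rw [Tk]
    have : negTuples 0 r = ∅ := by
      ext f
      simp [mem_negTuples]
      omega
    simp [this, h]

lemma comm_Tk (π : Module.End ℂ M) (b : ℤ → Module.End ℂ M) (m : ℤ) (c : ℂ)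
    (hb : ∀ i : ℤ, i ≤ -1 → π * b i - b i * π = (if i = -m then c else 0) • 1)
    (hm : 1 ≤ m) :
    ∀ (k : ℕ) (r : ℤ), π * Tk b k r - Tk b k r * π
      = ((k : ℂ) * c * ((m : ℤ) : ℂ)⁻¹) • Tk b (k - 1) (r + m) := by
  intro k
  induction k with
  | zero =>
    intro r
    rw [Tk_zero]
    by_cases h : r = 0 <;> simp [h]
  | succ k ih =>
    intro r
    rw [Tk_succ]
    have expand : π * (∑ i ∈ Finset.Icc r (-1), (-(i : ℂ))⁻¹ • (b i * Tk b k (r - i)))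
        - (∑ i ∈ Finset.Icc r (-1), (-(i : ℂ))⁻¹ • (b i * Tk b k (r - i))) * π
        = ∑ i ∈ Finset.Icc r (-1), (-(i : ℂ))⁻¹ •
            ((π * b i - b i * π) * Tk b k (r - i)
              + b i * (π * Tk b k (r - i) - Tk b k (r - i) * π)) := by
      rw [Finset.mul_sum, Finset.sum_mul, ← Finset.sum_sub_distrib]
      refine Finset.sum_congr rfl fun i _ => ?_
      rw [mul_smul_comm, smul_mul_assoc, ← smul_sub]
      congr 1
      noncomm_ring
    rw [expand]
    have termwise : ∀ i ∈ Finset.Icc r (-1), (-(i : ℂ))⁻¹ •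
            ((π * b i - b i * π) * Tk b k (r - i)
              + b i * (π * Tk b k (r - i) - Tk b k (r - i) * π))
        = (if i = -m then ((-(i : ℂ))⁻¹ * c) • Tk b k (r - i) else 0)
          + ((k : ℂ) * c * ((m : ℤ) : ℂ)⁻¹) •
              ((-(i : ℂ))⁻¹ • (b i * Tk b (k - 1) ((r - i) + m))) := by
      intro i hi
      rw [hb i (Finset.mem_Icc.mp hi).2, ih (r - i)]
      rw [smul_add]
      congr 1
      · by_cases h : i = -m <;> simp [h, smul_mul_assoc, smul_smul]
      · rw [mul_smul_comm, smul_comm]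
    rw [Finset.sum_congr rfl termwise, Finset.sum_add_distrib]
    have hS1 : ∑ i ∈ Finset.Icc r (-1),
          (if i = -m then ((-(i : ℂ))⁻¹ * c) • Tk b k (r - i) else 0)
        = (c * ((m : ℤ) : ℂ)⁻¹) • Tk b k (r + m) := by
      rw [Finset.sum_ite_eq' (Finset.Icc r (-1)) (-m)
        (fun i => ((-(i : ℂ))⁻¹ * c) • Tk b k (r - i))]
      by_cases h : (-m) ∈ Finset.Icc r (-1)
      · rw [if_pos h, show r - -m = r + m from by ring]
        congr 1
        push_cast
        ring
      · rw [if_neg h]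
        rw [Finset.mem_Icc] at h
        have hz : Tk b k (r + m) = 0 := Tk_eq_zero b (by omega)
        rw [hz, smul_zero]
    have hS2 : ∑ i ∈ Finset.Icc r (-1),
          ((k : ℂ) * c * ((m : ℤ) : ℂ)⁻¹) •
            ((-(i : ℂ))⁻¹ • (b i * Tk b (k - 1) ((r - i) + m)))
        = ((k : ℂ) * c * ((m : ℤ) : ℂ)⁻¹) • Tk b k (r + m) := by
      rcases Nat.eq_zero_or_pos k with hk | hk
      · subst hk; simp
      · have hk1 : k - 1 + 1 = k := Nat.succ_pred_eq_of_pos hk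
        rw [← Finset.smul_sum]
        congr 1
        have hvanish : ∀ i ∈ Finset.Icc r (-1), i ∉ Finset.Icc (r + m) (-1) →
            (-(i : ℂ))⁻¹ • (b i * Tk b (k - 1) ((r - i) + m)) = 0 := by
          intro i hi hni
          rw [Finset.mem_Icc] at hi
          rw [Finset.mem_Icc] at hni
          have hz : Tk b (k - 1) ((r - i) + m) = 0 := by
            refine Tk_eq_zero b ?_
            have : (0:ℤ) ≤ ((k - 1 : ℕ) : ℤ) := Int.natCast_nonneg _
            omega
          rw [hz, mul_zero, smul_zero]
        rw [← Finset.sum_subset (Finset.Icc_subset_Icc_left (by omega)) hvanish]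
        rw [Finset.sum_congr rfl (fun i _ => by
          rw [show (r - i) + m = (r + m) - i from by ring])]
        rw [← Tk_succ, hk1]
    rw [hS1, hS2, show k + 1 - 1 = k from rfl, ← add_smul]
    congr 1
    push_cast
    ring

lemma Ecoef_eq_sum (b : ℤ → Module.End ℂ M) (r : ℤ) (K : ℕ) (hK : (-r).toNat < K) :
    Ecoef b r = ∑ k ∈ Finset.range K, (k.factorial : ℂ)⁻¹ • Tk b k r := by
  rw [Ecoef]
  by_cases hr : 1 ≤ r
  · rw [if_pos hr]
    symm
    refine Finset.sum_eq_zero fun k _ => ?_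
    rw [Tk_eq_zero b (show -(k:ℤ) < r by omega), smul_zero]
  · rw [if_neg hr]
    refine Finset.sum_subset (Finset.range_subset_range.mpr (by omega)) ?_
    intro k _ hk
    rw [Finset.mem_range, not_lt] at hk
    have hz : Tk b k r = 0 := Tk_eq_zero b (by omega)
    rw [Tk] at hz
    rw [hz, smul_zero]

lemma comm_Ecoef (π : Module.End ℂ M) (b : ℤ → Module.End ℂ M) (m : ℤ) (c : ℂ)
    (hb : ∀ i : ℤ, i ≤ -1 → π * b i - b i * π = (if i = -m then c else 0) • 1)
    (hm : 1 ≤ m) (r : ℤ) :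
    π * Ecoef b r - Ecoef b r * π = (c * ((m : ℤ) : ℂ)⁻¹) • Ecoef b (r + m) := by
  set K : ℕ := (-r).toNat + m.toNat with hKdef
  have hK1 : (-r).toNat < K + 1 := by omega
  have hK2 : (-(r + m)).toNat < K := by omega
  rw [Ecoef_eq_sum b r (K + 1) hK1, Ecoef_eq_sum b (r + m) K hK2]
  rw [Finset.mul_sum, Finset.sum_mul, ← Finset.sum_sub_distrib]
  have termwise : ∀ k ∈ Finset.range (K + 1),
      π * ((k.factorial : ℂ)⁻¹ • Tk b k r) - ((k.factorial : ℂ)⁻¹ • Tk b k r) * π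
        = (k.factorial : ℂ)⁻¹ • (((k : ℂ) * c * ((m : ℤ) : ℂ)⁻¹) • Tk b (k - 1) (r + m)) := by
    intro k _
    rw [mul_smul_comm, smul_mul_assoc, ← smul_sub, comm_Tk π b m c hb hm]
  rw [Finset.sum_congr rfl termwise, Finset.sum_range_succ']
  have h0 : ((0 : ℕ).factorial : ℂ)⁻¹ • (((0 : ℕ) : ℂ) * c * ((m : ℤ) : ℂ)⁻¹) •
      Tk b (0 - 1) (r + m) = 0 := by simp
  rw [h0, add_zero, Finset.smul_sum]
  refine Finset.sum_congr rfl fun k _ => ?_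
  rw [show k + 1 - 1 = k from rfl, smul_smul, smul_smul]
  congr 1
  have h1 : ((k.factorial : ℕ) : ℂ) ≠ 0 := Nat.cast_ne_zero.mpr k.factorial_ne_zero
  have h3 : ((k : ℂ) + 1) ≠ 0 := by
    have := (Nat.cast_ne_zero (R := ℂ)).mpr (Nat.succ_ne_zero k)
    push_cast at this
    exact this
  have hm0 : ((m : ℤ) : ℂ) ≠ 0 := Int.cast_ne_zero.mpr (by omega)
  rw [Nat.factorial_succ, Nat.cast_mul, mul_inv, Nat.cast_add, Nat.cast_one]
  field_simp

lemma comm_Ecoef_of_comm (π : Module.End ℂ M) (b : ℤ → Module.End ℂ M)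
    (hb : ∀ i : ℤ, i ≤ -1 → Commute π (b i)) (r : ℤ) :
    Commute π (Ecoef b r) := by
  rw [Ecoef]
  split
  · exact Commute.zero_right π
  · refine Commute.sum_right _ _ _ fun k _ => Commute.smul_right ?_ _
    refine Commute.sum_right _ _ _ fun f hf => Commute.smul_right ?_ _
    refine Commute.list_prod_right _ _ fun x hx => ?_
    rw [List.mem_ofFn] at hx
    obtain ⟨j, rfl⟩ := hx
    exact hb _ ((mem_negTuples.mp hf).1 j)

lemma support_fin (b e : ℤ → Module.End ℂ M)
    (v : M) (N : ℤ) (hN : ∀ k : ℤ, N ≤ k → e k v = 0) (n s : ℤ) :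
    (Function.support fun r : ℤ => Ecoef b (r + s) (e (n - r) v)).Finite := by
  refine Set.Finite.subset (Set.finite_Icc (n - N + 1) (-s)) fun r hr => ?_
  simp only [Function.mem_support] at hr
  simp only [Set.mem_Icc]
  by_contra hc
  push_neg at hc
  rcases le_or_gt r (n - N) with h | h
  · exact hr (by rw [hN (n - r) (by omega), map_zero])
  · have h2 : r > -s := hc (by omega)
    have hz : Ecoef b (r + s) = 0 := by rw [Ecoef, if_pos (by omega)]
    exact hr (by rw [hz]; rfl)

lemma master (π : Module.End ℂ M) (b e : ℤ → Module.End ℂ M) (m n : ℤ) (ce : ℂ)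
    (hb : ∀ i : ℤ, i ≤ -1 →
      π * b i - b i * π = (if i = -m then -((m : ℤ) : ℂ) * ce else 0) • 1)
    (he : ∀ k : ℤ, π * e k - e k * π = ce • e (m + k))
    (hsm : ∀ v : M, ∃ N : ℤ, ∀ k : ℤ, N ≤ k → e k v = 0) :
    (m ≤ 0 → ∀ v : M, π (Aop b e n v) - Aop b e n (π v) = ce • Aop b e (m + n) v) ∧
    (1 ≤ m → ∀ v : M, π (Aop b e n v) = Aop b e n (π v)) := by
  constructor
  · intro hm v
    obtain ⟨N1, hN1⟩ := hsm v
    obtain ⟨N2, hN2⟩ := hsm (π v)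
    have hfin1 : (Function.support fun r : ℤ => Ecoef b r (e (n - r) v)).Finite := by
      have := support_fin b e v N1 hN1 n 0
      simpa using this
    have hfin2 : (Function.support fun r : ℤ => Ecoef b r (e (n - r) (π v))).Finite := by
      have := support_fin b e (π v) N2 hN2 n 0
      simpa using this
    have hfin3 : (Function.support fun r : ℤ => Ecoef b r (e ((m + n) - r) v)).Finite := by
      have := support_fin b e v N1 hN1 (m + n) 0
      simpa using this
    have hfin1' : (Function.support fun r : ℤ => π (Ecoef b r (e (n - r) v))).Finite := by
      refine hfin1.subset fun r hr => ?_
      simp only [Function.mem_support] at hr ⊢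
      intro h
      exact hr (by rw [h, map_zero])
    have hcomm : ∀ i : ℤ, i ≤ -1 → Commute π (b i) := by
      intro i hi
      have h := hb i hi
      rw [if_neg (by omega), zero_smul] at h
      exact sub_eq_zero.mp h
    have hmap : π (∑ᶠ r : ℤ, Ecoef b r (e (n - r) v))
        = ∑ᶠ r : ℤ, π (Ecoef b r (e (n - r) v)) :=
      π.toAddMonoidHom.map_finsum hfin1
    have termwise : ∀ r : ℤ, π (Ecoef b r (e (n - r) v)) - Ecoef b r (e (n - r) (π v))
        = ce • Ecoef b r (e ((m + n) - r) v) := by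
      intro r
      have hE : Commute π (Ecoef b r) := comm_Ecoef_of_comm π b hcomm r
      have h1 : π (Ecoef b r (e (n - r) v)) = Ecoef b r (π (e (n - r) v)) := by
        have := congrArg (fun (f : Module.End ℂ M) => f (e (n - r) v)) hE.eq
        simpa [Module.End.mul_apply] using this
      have h2 : π (e (n - r) v) - e (n - r) (π v) = ce • e (m + (n - r)) v := by
        have := congrArg (fun (f : Module.End ℂ M) => f v) (he (n - r))
        simpa [Module.End.mul_apply, LinearMap.sub_apply, LinearMap.smul_apply] using this
      rw [h1, ← map_sub, h2, show m + (n - r) = (m + n) - r from by ring, map_smul]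
    rw [Aop, Aop, Aop, hmap, ← finsum_sub_distrib hfin1' hfin2,
      finsum_congr termwise, ← smul_finsum' ce hfin3]
  · intro hm v
    obtain ⟨N1, hN1⟩ := hsm v
    obtain ⟨N2, hN2⟩ := hsm (π v)
    have hm0 : ((m : ℤ) : ℂ) ≠ 0 := Int.cast_ne_zero.mpr (by omega)
    have hfin1 : (Function.support fun r : ℤ => Ecoef b r (e (n - r) v)).Finite := by
      have := support_fin b e v N1 hN1 n 0
      simpa using this
    have hfin2 : (Function.support fun r : ℤ => Ecoef b r (e (n - r) (π v))).Finite := by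
      have := support_fin b e (π v) N2 hN2 n 0
      simpa using this
    have hfin3 : (Function.support fun r : ℤ => Ecoef b r (e ((m + n) - r) v)).Finite := by
      have := support_fin b e v N1 hN1 (m + n) 0
      simpa using this
    have hfin4 : (Function.support fun r : ℤ => Ecoef b (r + m) (e (n - r) v)).Finite :=
      support_fin b e v N1 hN1 n m
    have hfin1' : (Function.support fun r : ℤ => π (Ecoef b r (e (n - r) v))).Finite := by
      refine hfin1.subset fun r hr => ?_
      simp only [Function.mem_support] at hr ⊢
      intro h
      exact hr (by rw [h, map_zero])
    have hfin4' : (Function.support fun r : ℤ =>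
        (-ce) • Ecoef b (r + m) (e (n - r) v)).Finite := by
      refine hfin4.subset fun r hr => ?_
      simp only [Function.mem_support] at hr ⊢
      intro h
      exact hr (by rw [h, smul_zero])
    have hfin3' : (Function.support fun r : ℤ =>
        ce • Ecoef b r (e ((m + n) - r) v)).Finite := by
      refine hfin3.subset fun r hr => ?_
      simp only [Function.mem_support] at hr ⊢
      intro h
      exact hr (by rw [h, smul_zero])
    have hcE : ∀ r : ℤ, π * Ecoef b r - Ecoef b r * π = (-ce) • Ecoef b (r + m) := by
      intro r
      have := comm_Ecoef π b m (-((m : ℤ) : ℂ) * ce) hb hm r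
      rw [this]
      congr 1
      field_simp
    have hmap : π (∑ᶠ r : ℤ, Ecoef b r (e (n - r) v))
        = ∑ᶠ r : ℤ, π (Ecoef b r (e (n - r) v)) :=
      π.toAddMonoidHom.map_finsum hfin1
    have termwise : ∀ r : ℤ, π (Ecoef b r (e (n - r) v)) - Ecoef b r (e (n - r) (π v))
        = (-ce) • Ecoef b (r + m) (e (n - r) v) + ce • Ecoef b r (e ((m + n) - r) v) := by
      intro r
      have h1 : π (Ecoef b r (e (n - r) v)) = Ecoef b r (π (e (n - r) v))
          + (-ce) • Ecoef b (r + m) (e (n - r) v) := by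
        have := congrArg (fun (f : Module.End ℂ M) => f (e (n - r) v)) (hcE r)
        simp only [Module.End.mul_apply, LinearMap.sub_apply, LinearMap.smul_apply] at this
        linear_combination (norm := module) this
      have h2 : π (e (n - r) v) - e (n - r) (π v) = ce • e (m + (n - r)) v := by
        have := congrArg (fun (f : Module.End ℂ M) => f v) (he (n - r))
        simpa [Module.End.mul_apply, LinearMap.sub_apply, LinearMap.smul_apply] using this
      have h3 : Ecoef b r (e (n - r) (π v)) = Ecoef b r (π (e (n - r) v))
          - ce • Ecoef b r (e ((m + n) - r) v) := by
        have h4 : e (n - r) (π v) = π (e (n - r) v) - ce • e ((m + n) - r) v := by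
          rw [show (m + n) - r = m + (n - r) from by ring]
          linear_combination (norm := module) -h2
        rw [h4, map_sub, map_smul]
      rw [h1, h3]
      abel
    have hshift : (∑ᶠ r : ℤ, Ecoef b (r + m) (e (n - r) v))
        = ∑ᶠ s : ℤ, Ecoef b s (e ((m + n) - s) v) := by
      rw [← finsum_comp_equiv (Equiv.addRight m)
        (f := fun s : ℤ => Ecoef b s (e ((m + n) - s) v))]
      refine finsum_congr fun r => ?_
      simp only [Equiv.coe_addRight]
      congr 1
      ring
    have key : π (Aop b e n v) - Aop b e n (π v) = 0 := by
      rw [Aop, Aop, hmap, ← finsum_sub_distrib hfin1' hfin2, finsum_congr termwise,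
        finsum_add_distrib hfin4' hfin3', ← smul_finsum' (-ce) hfin4,
        ← smul_finsum' ce hfin3, hshift]
      rw [neg_smul]
      abel
    exact sub_eq_zero.mp key

theorem stmt_8 (κ : H →ₗ[ℂ] H →ₗ[ℂ] ℂ) (hκ : ∀ x y : H, κ x y = κ y x) (α : H)
    (πL πR : H → ℤ → Module.End ℂ M)
    (hLL : ∀ x y : H, ∀ m n : ℤ,
      πL x m * πL y n - πL y n * πL x m
        = if m + n = 0 then ((m : ℂ) * κ x y) • (1 : Module.End ℂ M) else 0)
    (hRR : ∀ x y : H, ∀ m n : ℤ,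
      πR x m * πR y n - πR y n * πR x m
        = if m + n = 0 then (-(m : ℂ) * κ x y) • (1 : Module.End ℂ M) else 0)
    (hLR : ∀ x y : H, ∀ m n : ℤ, πL x m * πR y n = πR y n * πL x m)
    (e : ℤ → Module.End ℂ M)
    (hsmooth : ∀ v : M, ∃ N : ℤ, ∀ n : ℤ, N ≤ n → e n v = 0)
    (hLe : ∀ x : H, ∀ m n : ℤ, πL x m * e n - e n * πL x m = κ x α • e (m + n))
    (hRe : ∀ x : H, ∀ m n : ℤ, πR x m * e n - e n * πR x m = -(κ x α) • e (m + n)) :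
    ∀ x : H, ∀ m n : ℤ,
      (m ≤ 0 → ∀ v : M,
        πL x m (Aop (diagB πL πR α) e n v) - Aop (diagB πL πR α) e n (πL x m v)
          = κ x α • Aop (diagB πL πR α) e (m + n) v) ∧
      (m ≤ 0 → ∀ v : M,
        πR x m (Aop (diagB πL πR α) e n v) - Aop (diagB πL πR α) e n (πR x m v)
          = -(κ x α) • Aop (diagB πL πR α) e (m + n) v) ∧
      (1 ≤ m → ∀ v : M,
        πL x m (Aop (diagB πL πR α) e n v) = Aop (diagB πL πR α) e n (πL x m v)) ∧
      (1 ≤ m → ∀ v : M,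
        πR x m (Aop (diagB πL πR α) e n v) = Aop (diagB πL πR α) e n (πR x m v)) := by
  intro x m n
  have hbL : ∀ i : ℤ, i ≤ -1 →
      πL x m * diagB πL πR α i - diagB πL πR α i * πL x m
        = (if i = -m then -((m : ℤ) : ℂ) * (κ x α) else 0) • 1 := by
    intro i _
    have h1 := hLL x α m i
    have h2 := hLR x α m i
    have expand : πL x m * diagB πL πR α i - diagB πL πR α i * πL x m
        = -(πL x m * πL α i - πL α i * πL x m)
          - (πL x m * πR α i - πR α i * πL x m) := by
      simp only [diagB]
      noncomm_ring
    rw [expand, h1, sub_eq_zero.mpr h2, sub_zero]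
    rcases eq_or_ne i (-m) with h | h
    · rw [if_pos (by omega), if_pos h, ← neg_smul, neg_mul]
    · rw [if_neg (by omega), if_neg h, neg_zero, zero_smul]
  have hbR : ∀ i : ℤ, i ≤ -1 →
      πR x m * diagB πL πR α i - diagB πL πR α i * πR x m
        = (if i = -m then -((m : ℤ) : ℂ) * (-(κ x α)) else 0) • 1 := by
    intro i _
    have h1 := hRR x α m i
    have h2 := hLR α x i m
    have expand : πR x m * diagB πL πR α i - diagB πL πR α i * πR x m
        = -(πR x m * πL α i - πL α i * πR x m)
          - (πR x m * πR α i - πR α i * πR x m) := by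
      simp only [diagB]
      noncomm_ring
    rw [expand, sub_eq_zero.mpr h2.symm, neg_zero, zero_sub, h1]
    rcases eq_or_ne i (-m) with h | h
    · rw [if_pos (by omega), if_pos h, ← neg_smul]
      congr 1
      ring
    · rw [if_neg (by omega), if_neg h, neg_zero, zero_smul]
  obtain ⟨LA, LB⟩ := master (πL x m) (diagB πL πR α) e m n (κ x α) hbL
    (fun k => hLe x m k) hsmooth
  obtain ⟨RA, RB⟩ := master (πR x m) (diagB πL πR α) e m n (-(κ x α)) hbR
    (fun k => hRe x m k) hsmooth
  exact ⟨LA, RA, LB, RB⟩
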